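/- arXiv:2103.09157 — 3 statements merged into one kernel-verified Lean document; each statement's English description precedes it below -/
import Mathlib

section
/- For all p = (p1, p2) in ℝ² with p1 ≥ exp(-1 - c2/c1) (where c1, c3 > 0 and c2 ∈ ℝ), the determinant of the Hessian of Ψ(p) = c1|p|log|p| + c2|p| + c3|p|³ is nonnegative. Explicitly, writing L = c1·log|p| + c2, one has [L·p2² + 3c3|p|²p2² + (c1+6c3p1²)|p|²] · [L·p1² + 3c3|p|²p1² + (c1+6c3p2²)|p|²] − [(L − 3c3|p|²)p1p2]² ≥ 0. -/
/-- nonnegativity of the Hessian determinant of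
`Ψ(p) = c1|p|log|p| + c2|p| + c3|p|³` on `K₋₁ = {p : p1 ≥ exp(-1 - c2/c1)}`. -/
theorem stmt1 (c1 c2 c3 p1 p2 : ℝ) (hc1 : 0 < c1) (hc3 : 0 < c3)
    (hp : Real.exp (-1 - c2 / c1) ≤ p1) :
    0 ≤ ((c1 * Real.log (Real.sqrt (p1 ^ 2 + p2 ^ 2)) + c2) * p2 ^ 2
          + 3 * c3 * Real.sqrt (p1 ^ 2 + p2 ^ 2) ^ 2 * p2 ^ 2
          + (c1 + 6 * c3 * p1 ^ 2) * Real.sqrt (p1 ^ 2 + p2 ^ 2) ^ 2)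
        * ((c1 * Real.log (Real.sqrt (p1 ^ 2 + p2 ^ 2)) + c2) * p1 ^ 2
          + 3 * c3 * Real.sqrt (p1 ^ 2 + p2 ^ 2) ^ 2 * p1 ^ 2
          + (c1 + 6 * c3 * p2 ^ 2) * Real.sqrt (p1 ^ 2 + p2 ^ 2) ^ 2)
      - (((c1 * Real.log (Real.sqrt (p1 ^ 2 + p2 ^ 2)) + c2)
          - 3 * c3 * Real.sqrt (p1 ^ 2 + p2 ^ 2) ^ 2) * p1 * p2) ^ 2 := by
  have hs : (0:ℝ) ≤ p1 ^ 2 + p2 ^ 2 := by positivity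
  have hsq : Real.sqrt (p1 ^ 2 + p2 ^ 2) ^ 2 = p1 ^ 2 + p2 ^ 2 := Real.sq_sqrt hs
  have hp1 : 0 < p1 := lt_of_lt_of_le (Real.exp_pos _) hp
  have hsr : p1 ≤ Real.sqrt (p1 ^ 2 + p2 ^ 2) := by
    nlinarith [hsq, Real.sqrt_nonneg (p1 ^ 2 + p2 ^ 2)]
  have hlog : -1 - c2 / c1 ≤ Real.log (Real.sqrt (p1 ^ 2 + p2 ^ 2)) := by
    calc -1 - c2 / c1 ≤ Real.log p1 := (Real.le_log_iff_exp_le hp1).mpr hp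
    _ ≤ _ := Real.log_le_log hp1 hsr
  set L := Real.log (Real.sqrt (p1 ^ 2 + p2 ^ 2)) with hL
  have hLc : 0 ≤ c1 * L + c2 + c1 := by
    have : c1 * (-1 - c2 / c1) = -c1 - c2 := by field_simp
    nlinarith [mul_le_mul_of_nonneg_left hlog hc1.le]
  rw [hsq]
  have key : ((c1 * L + c2) * p2 ^ 2 + 3 * c3 * (p1 ^ 2 + p2 ^ 2) * p2 ^ 2
        + (c1 + 6 * c3 * p1 ^ 2) * (p1 ^ 2 + p2 ^ 2))
      * ((c1 * L + c2) * p1 ^ 2 + 3 * c3 * (p1 ^ 2 + p2 ^ 2) * p1 ^ 2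
        + (c1 + 6 * c3 * p2 ^ 2) * (p1 ^ 2 + p2 ^ 2))
      - (((c1 * L + c2) - 3 * c3 * (p1 ^ 2 + p2 ^ 2)) * p1 * p2) ^ 2
      = (p1 ^ 2 + p2 ^ 2) ^ 2 * (c1 + 6 * c3 * (p1 ^ 2 + p2 ^ 2))
        * ((c1 * L + c2 + c1) + 3 * c3 * (p1 ^ 2 + p2 ^ 2)) := by ring
  rw [key]
  positivity
end

section
/- λ-convexity Hessian diagonal bound: Let c1, c3 > 0 and p = (p1,p2) ∈ ℝ² with |p| > 0, and suppose c1 log|p| + c2 ≥ 9c1 (i.e., p lies where log|p| ≥ 9 − c2/c1). Then (1/|p|³)[c1 p2² log|p| + c2 p2² + c1|p|² + 3c3(2p1² + p2²)|p|²] ≥ 2√(5c1c3), and symmetrically with p1, p2 exchanged. -/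
lemma key16 (c1 c3 t L x y : ℝ) (hc1 : 0 < c1) (hc3 : 0 < c3) (ht : 0 < t)
    (hL : 9 * c1 ≤ L) (hx : 0 ≤ x) (hy : 0 ≤ y) (hxy : x + y = t ^ 2) :
    2 * Real.sqrt (5 * c1 * c3)
      ≤ (1 / t ^ 3) * (L * x + c1 * t ^ 2 + 3 * c3 * (2 * y + x) * t ^ 2) := by
  set s := Real.sqrt (5 * c1 * c3) with hs
  have hs0 : 0 ≤ s := Real.sqrt_nonneg _
  have hs2 : s ^ 2 = 5 * c1 * c3 := by
    rw [hs, Real.sq_sqrt]; positivity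
  have ht3 : 0 < t ^ 3 := by positivity
  have hLx : 9 * c1 * x ≤ L * x := by nlinarith
  have hab : s ^ 2 * t ^ 6 ≤ (9 * c1 * x + c1 * t ^ 2) * (3 * c3 * (2 * y + x) * t ^ 2) := by
    have ht2 : t ^ 2 = x + y := hxy.symm
    rw [hs2, show t ^ 6 = (x + y) ^ 3 from by rw [← ht2]; ring, ht2]
    have cc : (0:ℝ) ≤ c1 * c3 := (mul_pos hc1 hc3).le
    nlinarith [mul_nonneg (mul_nonneg cc (mul_nonneg hx hx)) hx,
      mul_nonneg (mul_nonneg cc (mul_nonneg hx hx)) hy,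
      mul_nonneg (mul_nonneg cc (mul_nonneg hx hy)) hy,
      mul_nonneg (mul_nonneg cc (mul_nonneg hy hy)) hy]
  have hmain : 2 * s * t ^ 3 ≤ 9 * c1 * x + c1 * t ^ 2 + 3 * c3 * (2 * y + x) * t ^ 2 := by
    set a := 9 * c1 * x + c1 * t ^ 2 with hadef
    set b := 3 * c3 * (2 * y + x) * t ^ 2 with hbdef
    have hbpos : 0 < b := by
      have : 0 < 2 * y + x := by nlinarith [sq_nonneg t]
      positivity
    have hapos : 0 < a := by positivity
    have hsum : 0 < a + b + 2 * s * t ^ 3 := by positivity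
    nlinarith [sq_nonneg (a - b), hab, hsum]
  have hN : 2 * s * t ^ 3 ≤ L * x + c1 * t ^ 2 + 3 * c3 * (2 * y + x) * t ^ 2 := by linarith
  rw [one_div, inv_mul_eq_div, le_div_iff₀ ht3]
  linarith

/-- λ-convexity Hessian diagonal bound: if `c1 log|p| + c2 ≥ 9c1` and
`|p| > 0`, then both diagonal Hessian entries of the shifted density are at least
`2√(5c1c3)`. -/
theorem stmt16 (c1 c2 c3 p1 p2 : ℝ) (hc1 : 0 < c1) (hc3 : 0 < c3)
    (hp : 0 < Real.sqrt (p1 ^ 2 + p2 ^ 2))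
    (hlog : 9 * c1 ≤ c1 * Real.log (Real.sqrt (p1 ^ 2 + p2 ^ 2)) + c2) :
    2 * Real.sqrt (5 * c1 * c3)
        ≤ (1 / Real.sqrt (p1 ^ 2 + p2 ^ 2) ^ 3) *
            (c1 * p2 ^ 2 * Real.log (Real.sqrt (p1 ^ 2 + p2 ^ 2)) + c2 * p2 ^ 2
              + c1 * Real.sqrt (p1 ^ 2 + p2 ^ 2) ^ 2
              + 3 * c3 * (2 * p1 ^ 2 + p2 ^ 2) * Real.sqrt (p1 ^ 2 + p2 ^ 2) ^ 2) ∧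
      2 * Real.sqrt (5 * c1 * c3)
        ≤ (1 / Real.sqrt (p1 ^ 2 + p2 ^ 2) ^ 3) *
            (c1 * p1 ^ 2 * Real.log (Real.sqrt (p1 ^ 2 + p2 ^ 2)) + c2 * p1 ^ 2
              + c1 * Real.sqrt (p1 ^ 2 + p2 ^ 2) ^ 2
              + 3 * c3 * (2 * p2 ^ 2 + p1 ^ 2) * Real.sqrt (p1 ^ 2 + p2 ^ 2) ^ 2) := by
  set t := Real.sqrt (p1 ^ 2 + p2 ^ 2) with hts
  have ht2 : t ^ 2 = p1 ^ 2 + p2 ^ 2 := by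
    rw [hts, Real.sq_sqrt]; positivity
  set L := c1 * Real.log t + c2 with hLdef
  constructor
  · have h := key16 c1 c3 t L (p2 ^ 2) (p1 ^ 2) hc1 hc3 hp hlog (sq_nonneg _) (sq_nonneg _)
      (by linarith)
    calc 2 * Real.sqrt (5 * c1 * c3)
        ≤ (1 / t ^ 3) * (L * p2 ^ 2 + c1 * t ^ 2 + 3 * c3 * (2 * p1 ^ 2 + p2 ^ 2) * t ^ 2) := h
      _ = _ := by rw [hLdef]; ring
  · have h := key16 c1 c3 t L (p1 ^ 2) (p2 ^ 2) hc1 hc3 hp hlog (sq_nonneg _) (sq_nonneg _)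
      (by linarith)
    calc 2 * Real.sqrt (5 * c1 * c3)
        ≤ (1 / t ^ 3) * (L * p1 ^ 2 + c1 * t ^ 2 + 3 * c3 * (2 * p2 ^ 2 + p1 ^ 2) * t ^ 2) := h
      _ = _ := by rw [hLdef]; ring
end

section
/- Hessian determinant bound for the shifted density: Let c1, c3 > 0, c2 ∈ ℝ, and p = (p1,p2) ∈ ℝ² with c1 log|p| + c2 ≥ 9c1 and |p| > 0. Writing r = |p| and Λ = c1 log r + c2, one has r²Λ(c1r² + 6c3r⁴ − 2√(5c1c3) r³) + 29c1c3 r⁶ + 18c3² r⁸ + c1² r⁴ − 2√(5c1c3) r⁵(2c1 + 9c3 r²) ≥ 0. -/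
lemma aux18 (c1 c3 r s L : ℝ) (hc1 : 0 < c1) (hc3 : 0 < c3) (hr : 0 < r)
    (hs : s ^ 2 = 5 * c1 * c3) (hL : 9 * c1 ≤ L) :
    0 ≤ r ^ 2 * L * (c1 * r ^ 2 + 6 * c3 * r ^ 4 - 2 * s * r ^ 3)
        + 29 * c1 * c3 * r ^ 6 + 18 * c3 ^ 2 * r ^ 8 + c1 ^ 2 * r ^ 4
        - 2 * s * r ^ 5 * (2 * c1 + 9 * c3 * r ^ 2) := by
  have hA : 0 ≤ c1 * r ^ 2 + 6 * c3 * r ^ 4 - 2 * s * r ^ 3 := by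
    nlinarith [sq_nonneg (s * r - 5 * c3 * r ^ 2), sq_nonneg (c3 * r ^ 2), hc3.le, hs]
  have h1 : 0 ≤ r ^ 2 * (L - 9 * c1) * (c1 * r ^ 2 + 6 * c3 * r ^ 4 - 2 * s * r ^ 3) :=
    mul_nonneg (mul_nonneg (sq_nonneg r) (by linarith)) hA
  have e2 : s ^ 2 * r ^ 6 = 5 * c1 * c3 * r ^ 6 := by rw [hs]
  nlinarith [h1, mul_nonneg (sq_nonneg (20 * c1 * r - 22 * s * r ^ 2)) (sq_nonneg r),
    mul_nonneg (sq_nonneg (s * r - 2 * c3 * r ^ 2)) (pow_nonneg hr.le 4), e2]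

/-- Hessian determinant bound for the shifted density: with `r = |p| > 0`
and `Λ = c1 log r + c2 ≥ 9c1`,
`r²Λ(c1r² + 6c3r⁴ − 2√(5c1c3)r³) + 29c1c3r⁶ + 18c3²r⁸ + c1²r⁴
  − 2√(5c1c3)r⁵(2c1 + 9c3r²) ≥ 0`. -/
theorem stmt18 (c1 c2 c3 p1 p2 : ℝ) (hc1 : 0 < c1) (hc3 : 0 < c3)
    (hp : 0 < Real.sqrt (p1 ^ 2 + p2 ^ 2))
    (hlog : 9 * c1 ≤ c1 * Real.log (Real.sqrt (p1 ^ 2 + p2 ^ 2)) + c2) :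
    0 ≤ Real.sqrt (p1 ^ 2 + p2 ^ 2) ^ 2 *
          (c1 * Real.log (Real.sqrt (p1 ^ 2 + p2 ^ 2)) + c2) *
          (c1 * Real.sqrt (p1 ^ 2 + p2 ^ 2) ^ 2 + 6 * c3 * Real.sqrt (p1 ^ 2 + p2 ^ 2) ^ 4
            - 2 * Real.sqrt (5 * c1 * c3) * Real.sqrt (p1 ^ 2 + p2 ^ 2) ^ 3)
        + 29 * c1 * c3 * Real.sqrt (p1 ^ 2 + p2 ^ 2) ^ 6
        + 18 * c3 ^ 2 * Real.sqrt (p1 ^ 2 + p2 ^ 2) ^ 8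
        + c1 ^ 2 * Real.sqrt (p1 ^ 2 + p2 ^ 2) ^ 4
        - 2 * Real.sqrt (5 * c1 * c3) * Real.sqrt (p1 ^ 2 + p2 ^ 2) ^ 5 *
            (2 * c1 + 9 * c3 * Real.sqrt (p1 ^ 2 + p2 ^ 2) ^ 2) := by
  have hs : Real.sqrt (5 * c1 * c3) ^ 2 = 5 * c1 * c3 :=
    Real.sq_sqrt (by positivity)
  have := aux18 c1 c3 (Real.sqrt (p1 ^ 2 + p2 ^ 2)) (Real.sqrt (5 * c1 * c3))
    (c1 * Real.log (Real.sqrt (p1 ^ 2 + p2 ^ 2)) + c2) hc1 hc3 hp hs hlog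
  linarith [this]
end
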